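/- Let A be an n×n binary matrix. Then min_{h ∈ {0,1}ⁿ} ∑_{i≠j} |A_{ij} − h_i h_j| = min_{h ∈ [0,1]ⁿ} ∑_{i≠j} |A_{ij} − h_i h_j|, i.e., the rank-one off-diagonal ℓ1 problem over [0,1]ⁿ always admits a binary optimal solution. -/

import Mathlib

open Finset

private noncomputable def objf {n : ℕ} (A : Matrix (Fin n) (Fin n) ℝ) (h : Fin n → ℝ) : ℝ :=
  ∑ p ∈ Finset.univ.offDiag, |A p.1 p.2 - h p.1 * h p.2|

private lemma objf_affine {n : ℕ} (A : Matrix (Fin n) (Fin n) ℝ)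
    (hA : ∀ i j, A i j = 0 ∨ A i j = 1) (h : Fin n → ℝ)
    (hb : ∀ i, 0 ≤ h i ∧ h i ≤ 1) (a : Fin n) :
    objf A h = (1 - h a) * objf A (Function.update h a 0)
      + h a * objf A (Function.update h a 1) := by
  unfold objf
  rw [Finset.mul_sum, Finset.mul_sum, ← Finset.sum_add_distrib]
  refine Finset.sum_congr rfl ?_
  intro p hp
  obtain ⟨-, -, hne⟩ := Finset.mem_offDiag.mp hp
  obtain ⟨i, j⟩ := p
  simp only at hne ⊢
  have ht0 := (hb a).1
  have ht1 := (hb a).2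
  by_cases hia : i = a
  · subst hia
    have hja : j ≠ i := fun e => hne e.symm
    rw [Function.update_self, Function.update_self,
        Function.update_of_ne hja, Function.update_of_ne hja]
    have hc0 := (hb j).1
    have hc1 := (hb j).2
    rcases hA i j with hA0 | hA1
    · rw [hA0]
      rw [abs_of_nonpos (by nlinarith), abs_of_nonpos (by nlinarith),
          abs_of_nonpos (by nlinarith)]
      ring
    · rw [hA1]
      rw [abs_of_nonneg (by nlinarith), abs_of_nonneg (by nlinarith),
          abs_of_nonneg (by nlinarith)]
      ring
  · by_cases hja : j = a
    · subst hja
      rw [Function.update_self, Function.update_self,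
          Function.update_of_ne hia, Function.update_of_ne hia]
      have hc0 := (hb i).1
      have hc1 := (hb i).2
      rcases hA i j with hA0 | hA1
      · rw [hA0]
        rw [abs_of_nonpos (by nlinarith), abs_of_nonpos (by nlinarith),
            abs_of_nonpos (by nlinarith)]
        ring
      · rw [hA1]
        rw [abs_of_nonneg (by nlinarith), abs_of_nonneg (by nlinarith),
            abs_of_nonneg (by nlinarith)]
        ring
    · rw [Function.update_of_ne hia, Function.update_of_ne hja,
          Function.update_of_ne hia, Function.update_of_ne hja]
      ring

private lemma objf_round {n : ℕ} (A : Matrix (Fin n) (Fin n) ℝ)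
    (hA : ∀ i j, A i j = 0 ∨ A i j = 1) :
    ∀ s : Finset (Fin n), ∀ h : Fin n → ℝ, (∀ i, 0 ≤ h i ∧ h i ≤ 1) →
      (∀ i, i ∉ s → h i = 0 ∨ h i = 1) →
      ∃ h' : Fin n → ℝ, (∀ i, h' i = 0 ∨ h' i = 1) ∧ objf A h' ≤ objf A h := by
  intro s
  induction s using Finset.induction_on with
  | empty =>
    intro h hb hbin
    exact ⟨h, fun i => hbin i (Finset.notMem_empty i), le_refl _⟩
  | insert _ _ hnotmem ih =>
    rename_i a s
    intro h hb hbin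
    set h0 := Function.update h a 0 with hh0
    set h1 := Function.update h a 1 with hh1
    have hb0 : ∀ i, 0 ≤ h0 i ∧ h0 i ≤ 1 := by
      intro i
      by_cases hi : i = a
      · subst hi; simp [hh0]
      · rw [hh0, Function.update_of_ne hi]; exact hb i
    have hb1 : ∀ i, 0 ≤ h1 i ∧ h1 i ≤ 1 := by
      intro i
      by_cases hi : i = a
      · subst hi; simp [hh1]
      · rw [hh1, Function.update_of_ne hi]; exact hb i
    have hbin0 : ∀ i, i ∉ s → h0 i = 0 ∨ h0 i = 1 := by
      intro i hi
      by_cases hia : i = a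
      · subst hia; left; simp [hh0]
      · rw [hh0, Function.update_of_ne hia]
        exact hbin i (by simp [hia, hi])
    have hbin1 : ∀ i, i ∉ s → h1 i = 0 ∨ h1 i = 1 := by
      intro i hi
      by_cases hia : i = a
      · subst hia; right; simp [hh1]
      · rw [hh1, Function.update_of_ne hia]
        exact hbin i (by simp [hia, hi])
    obtain ⟨h0', hbin0', hle0⟩ := ih h0 hb0 hbin0
    obtain ⟨h1', hbin1', hle1⟩ := ih h1 hb1 hbin1
    have haff := objf_affine A hA h hb a
    have ht0 := (hb a).1
    have ht1 := (hb a).2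
    by_cases hcmp : objf A h0 ≤ objf A h1
    · exact ⟨h0', hbin0', by nlinarith⟩
    · push_neg at hcmp
      exact ⟨h1', hbin1', by nlinarith⟩

theorem stmt3 (n : ℕ) (A : Matrix (Fin n) (Fin n) ℝ)
    (hA : ∀ i j, A i j = 0 ∨ A i j = 1) :
    sInf {y : ℝ | ∃ h : Fin n → ℝ, (∀ i, h i = 0 ∨ h i = 1) ∧
        y = ∑ p ∈ Finset.univ.offDiag, |A p.1 p.2 - h p.1 * h p.2|} =
      sInf {y : ℝ | ∃ h : Fin n → ℝ, (∀ i, 0 ≤ h i ∧ h i ≤ 1) ∧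
        y = ∑ p ∈ Finset.univ.offDiag, |A p.1 p.2 - h p.1 * h p.2|} := by
  set B := {y : ℝ | ∃ h : Fin n → ℝ, (∀ i, h i = 0 ∨ h i = 1) ∧
      y = ∑ p ∈ Finset.univ.offDiag, |A p.1 p.2 - h p.1 * h p.2|} with hB
  set C := {y : ℝ | ∃ h : Fin n → ℝ, (∀ i, 0 ≤ h i ∧ h i ≤ 1) ∧
      y = ∑ p ∈ Finset.univ.offDiag, |A p.1 p.2 - h p.1 * h p.2|} with hC
  have hBC : B ⊆ C := by
    rintro y ⟨h, hbin, rfl⟩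
    exact ⟨h, fun i => by rcases hbin i with e | e <;> rw [e] <;> norm_num, rfl⟩
  have hBne : B.Nonempty := ⟨_, (fun _ => (0:ℝ)), fun _ => Or.inl rfl, rfl⟩
  have hBbd : BddBelow B := by
    refine ⟨0, ?_⟩
    rintro y ⟨h, -, rfl⟩
    exact Finset.sum_nonneg fun p _ => abs_nonneg _
  have hCbd : BddBelow C := by
    refine ⟨0, ?_⟩
    rintro y ⟨h, -, rfl⟩
    exact Finset.sum_nonneg fun p _ => abs_nonneg _
  apply le_antisymm
  · apply le_csInf (hBne.mono hBC)
    rintro y ⟨h, hb, rfl⟩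
    obtain ⟨h', hbin', hle⟩ := objf_round A hA Finset.univ h hb
      (fun i hi => absurd (Finset.mem_univ i) hi)
    calc sInf B ≤ objf A h' := csInf_le hBbd ⟨h', hbin', rfl⟩
      _ ≤ objf A h := hle
  · exact csInf_le_csInf hCbd hBne hBC
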